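/- Let p be a prime, let m ≥ 2 be an integer with p ∤ m, and let f ∈ 𝔽_p[x] be squarefree of degree d ≥ 3. Then for every a ∈ 𝔽_p and all integers j, ℓ with 1 ≤ j ≤ μ and 1 ≤ ℓ ≤ μ one has the matrix identity B^{jℓ}[f(x+a)] · T^ℓ(a) = T^j(a) · B^{jℓ}[f(x)]. Consequently, if A[g] denotes the block matrix [B^{jℓ}[g]]_{1≤j,ℓ≤μ} and T(a) the block-diagonal matrix with diagonal blocks T^1(a), …, T^μ(a), then A[f(x+a)] = T(a) · A[f(x)] · T(−a). -/

import Mathlib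

/-- `d_j := d − ⌊d·j/m⌋ − 1`. -/
def dBlock (m d j : ℕ) : ℕ := d - d * j / m - 1

/-- The `d_j × d_ℓ` matrix `B^{jℓ}[g]` over `𝔽_p` whose (1-indexed) `(i,k)` entry is
the coefficient of `x^{i·p−k}` in `g(x)^{n_j}` (with `n_j := p − 1 − ⌊j·p/m⌋`) when
`ℓ ≡ j·p (mod m)`, and `0` otherwise; coefficients at negative indices are `0`. -/
noncomputable def Bblock (p m d : ℕ) (g : Polynomial (ZMod p)) (j ℓ : ℕ) :
    Matrix (Fin (dBlock m d j)) (Fin (dBlock m d ℓ)) (ZMod p) :=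
  Matrix.of fun i k =>
    if ℓ % m = (j * p) % m ∧ (k : ℕ) + 1 ≤ ((i : ℕ) + 1) * p then
      (g ^ (p - 1 - j * p / m)).coeff (((i : ℕ) + 1) * p - ((k : ℕ) + 1))
    else 0

/-- The `n × n` matrix `T^j(a)` whose (1-indexed) `(i,k)` entry is
`binom(k−1, i−1)·a^{k−i}` for `i ≤ k` and `0` for `i > k`. -/
noncomputable def Tj (p : ℕ) (n : ℕ) (a : ZMod p) : Matrix (Fin n) (Fin n) (ZMod p) :=
  Matrix.of fun i k =>
    if (i : ℕ) ≤ (k : ℕ) then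
      ((k : ℕ).choose (i : ℕ) : ZMod p) * a ^ ((k : ℕ) - (i : ℕ))
    else 0

/-- The block matrix `A[g] = [B^{jℓ}[g]]_{1 ≤ j,ℓ ≤ μ}` with `μ := m − ⌊m/d⌋ − 1`,
indexed by pairs `⟨j, i⟩` with `1 ≤ j ≤ μ` and `1 ≤ i ≤ d_j` (0-indexed below). -/
noncomputable def Amat (p m d : ℕ) (g : Polynomial (ZMod p)) :
    Matrix ((j : Fin (m - m / d - 1)) × Fin (dBlock m d ((j : ℕ) + 1)))
           ((j : Fin (m - m / d - 1)) × Fin (dBlock m d ((j : ℕ) + 1))) (ZMod p) :=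
  Matrix.of fun x y => Bblock p m d g ((x.1 : ℕ) + 1) ((y.1 : ℕ) + 1) x.2 y.2

/-- The block-diagonal matrix `T(a)` with diagonal blocks `T^1(a), …, T^μ(a)`. -/
noncomputable def Tbig (p m d : ℕ) (a : ZMod p) :
    Matrix ((j : Fin (m - m / d - 1)) × Fin (dBlock m d ((j : ℕ) + 1)))
           ((j : Fin (m - m / d - 1)) × Fin (dBlock m d ((j : ℕ) + 1))) (ZMod p) :=
  Matrix.of fun x y =>
    if (x.1 : ℕ) = (y.1 : ℕ) ∧ (x.2 : ℕ) ≤ (y.2 : ℕ) then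
      ((y.2 : ℕ).choose (x.2 : ℕ) : ZMod p) * a ^ ((y.2 : ℕ) - (x.2 : ℕ))
    else 0

open Polynomial Finset

lemma coeff_comp_add' {p : ℕ} (h : Polynomial (ZMod p)) (a : ZMod p) (s : ℕ) :
    (h.comp (X + C a)).coeff s
      = ∑ t ∈ range (h.natDegree + 1), h.coeff t * ((t.choose s : ZMod p) * a ^ (t - s)) := by
  have h1 : (h.comp (X + C a)).coeff s
      = h.sum fun e c => c * ((e.choose s : ZMod p) * a ^ (e - s)) := by
    rw [comp_eq_sum_left, Polynomial.sum_def, Polynomial.finset_sum_coeff]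
    apply Finset.sum_congr rfl
    intro t _
    rw [coeff_C_mul, coeff_X_add_C_pow]
    ring
  rw [h1, Polynomial.sum_over_range]
  intro n; simp

lemma vand' (k dl N t : ℕ) (hk : k < dl) (hN : 1 ≤ N) :
    ∑ x ∈ range dl, (if x + 1 ≤ N ∧ x ≤ k then k.choose x * t.choose (N - 1 - x) else 0)
      = (k + t).choose (N - 1) := by
  have h1 : (k + t).choose (N - 1) = ∑ x ∈ range N, k.choose x * t.choose (N - 1 - x) := by
    rw [Nat.add_choose_eq, Finset.Nat.sum_antidiagonal_eq_sum_range_succ_mk]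
    apply Finset.sum_congr (by congr 1; omega) (fun x _ => rfl)
  have h2 : ∑ x ∈ range N, k.choose x * t.choose (N - 1 - x)
      = ∑ x ∈ range N, (if x + 1 ≤ N ∧ x ≤ k then k.choose x * t.choose (N - 1 - x) else 0) := by
    apply Finset.sum_congr rfl
    intro x hx
    rw [Finset.mem_range] at hx
    by_cases hxk : x ≤ k
    · rw [if_pos ⟨by omega, hxk⟩]
    · rw [if_neg (by tauto), Nat.choose_eq_zero_of_lt (by omega), zero_mul]
  have h3 : ∑ x ∈ range dl, (if x + 1 ≤ N ∧ x ≤ k then k.choose x * t.choose (N - 1 - x) else 0)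
      = ∑ x ∈ range (dl + N), (if x + 1 ≤ N ∧ x ≤ k then k.choose x * t.choose (N - 1 - x) else 0) := by
    apply Finset.sum_subset (Finset.range_subset_range.2 (by omega))
    intro x _ hx
    rw [Finset.mem_range] at hx
    rw [if_neg (by omega)]
  have h4 : ∑ x ∈ range N, (if x + 1 ≤ N ∧ x ≤ k then k.choose x * t.choose (N - 1 - x) else 0)
      = ∑ x ∈ range (dl + N), (if x + 1 ≤ N ∧ x ≤ k then k.choose x * t.choose (N - 1 - x) else 0) := by
    apply Finset.sum_subset (Finset.range_subset_range.2 (by omega))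
    intro x _ hx
    rw [Finset.mem_range] at hx
    rw [if_neg (by omega)]
  omega

lemma keyIneq' (p m d j ℓ : ℕ) (hp : 2 ≤ p) (hm : 2 ≤ m) (hd : 3 ≤ d)
    (hjm : j < m) (hlm : ℓ < m)
    (hℓ : ℓ = (j * p) % m)
    (hdj : d * j / m + 2 ≤ d) (hdl : d * ℓ / m + 2 ≤ d) :
    (p - 1 - j * p / m) * d + dBlock m d ℓ < (dBlock m d j + 1) * p := by
  set q1 := j * p / m with hq1def
  set q2 := d * j / m with hq2def
  set q3 := d * ℓ / m with hq3def
  have e1 : j * p = m * q1 + ℓ := by rw [hℓ]; exact (Nat.div_add_mod _ _).symm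
  have e2 : d * j = m * q2 + (d * j) % m := (Nat.div_add_mod _ _).symm
  have e3 : d * ℓ = m * q3 + (d * ℓ) % m := (Nat.div_add_mod _ _).symm
  have hq1p : q1 < p := by
    apply Nat.div_lt_of_lt_mul
    have : j * p < m * p := (Nat.mul_lt_mul_right (by omega : 0 < p)).mpr hjm
    omega
  have e4 : (d * ℓ) % m = ((d * j) % m * p) % m := by
    rw [hℓ, Nat.mul_mod_mod, ← mul_assoc, Nat.mod_mul_mod]
  have r3le : (d * ℓ) % m ≤ (d * j) % m * p := e4 ▸ Nat.mod_le _ _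
  have h5 : m * (q2 * p) + ((d * j) % m) * p = m * (q1 * d) + (m * q3 + (d * ℓ) % m) := by
    calc m * (q2 * p) + ((d * j) % m) * p = (m * q2 + (d * j) % m) * p := by ring
      _ = (d * j) * p := by rw [← e2]
      _ = d * (j * p) := by ring
      _ = d * (m * q1 + ℓ) := by rw [← e1]
      _ = m * (q1 * d) + d * ℓ := by ring
      _ = m * (q1 * d) + (m * q3 + (d * ℓ) % m) := by rw [← e3]
  have h6 : m * (q2 * p) ≤ m * (q1 * d + q3) := by nlinarith
  have hq : q2 * p ≤ q1 * d + q3 := Nat.le_of_mul_le_mul_left h6 (by omega)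
  unfold dBlock
  rw [← hq2def, ← hq3def]
  zify [show q1 ≤ p - 1 by omega, show (1:ℕ) ≤ p by omega,
    show (1:ℕ) ≤ d - q3 by omega, show q3 ≤ d by omega,
    show (1:ℕ) ≤ d - q2 by omega, show q2 ≤ d by omega]
  nlinarith [hq]

lemma Tj_mul' (p n : ℕ) (a b : ZMod p) : Tj p n a * Tj p n b = Tj p n (a + b) := by
  ext i k
  rw [Matrix.mul_apply]
  simp only [Tj, Matrix.of_apply]
  rw [Fin.sum_univ_eq_sum_range (fun x =>
    (if (i:ℕ) ≤ x then ((x).choose (i:ℕ) : ZMod p) * a ^ (x - (i:ℕ)) else 0) *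
    (if x ≤ (k:ℕ) then ((k:ℕ).choose x : ZMod p) * b ^ ((k:ℕ) - x) else 0))]
  by_cases hik : (i:ℕ) ≤ (k:ℕ)
  · rw [if_pos hik]
    have hkn : (k:ℕ) < n := k.isLt
    rw [show range n = range (((i:ℕ) + (((k:ℕ) - (i:ℕ)) + 1)) + (n - ((k:ℕ)+1))) from by
      congr 1; omega]
    rw [Finset.sum_range_add, Finset.sum_range_add]
    have z1 : ∑ x ∈ range (i:ℕ),
        ((if (i:ℕ) ≤ x then ((x).choose (i:ℕ) : ZMod p) * a ^ (x - (i:ℕ)) else 0) *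
         (if x ≤ (k:ℕ) then ((k:ℕ).choose x : ZMod p) * b ^ ((k:ℕ) - x) else 0)) = 0 := by
      apply Finset.sum_eq_zero
      intro x hx
      rw [Finset.mem_range] at hx
      rw [if_neg (by omega), zero_mul]
    have z2 : ∑ x ∈ range (n - ((k:ℕ)+1)),
        (fun y => (if (i:ℕ) ≤ y then ((y).choose (i:ℕ) : ZMod p) * a ^ (y - (i:ℕ)) else 0) *
         (if y ≤ (k:ℕ) then ((k:ℕ).choose y : ZMod p) * b ^ ((k:ℕ) - y) else 0))
           (((i:ℕ) + (((k:ℕ) - (i:ℕ)) + 1)) + x) = 0 := by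
      apply Finset.sum_eq_zero
      intro x hx
      beta_reduce
      rw [if_neg (show ¬ (((i:ℕ) + (((k:ℕ) - (i:ℕ)) + 1)) + x ≤ (k:ℕ)) by omega), mul_zero]
    rw [z1, z2, zero_add, add_zero]
    rw [add_pow]
    rw [Finset.mul_sum]
    apply Finset.sum_congr rfl
    intro u hu
    rw [Finset.mem_range] at hu
    beta_reduce
    rw [if_pos (by omega), if_pos (by omega)]
    have hc : ((k:ℕ)).choose ((i:ℕ)+u) * ((i:ℕ)+u).choose (i:ℕ)
        = ((k:ℕ)).choose (i:ℕ) * (((k:ℕ)) - (i:ℕ)).choose u := by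
      rw [Nat.choose_mul (by omega)]
      congr 2
      omega
    have h1 : ((i:ℕ) + u) - (i:ℕ) = u := by omega
    have h2 : (k:ℕ) - ((i:ℕ) + u) = ((k:ℕ) - (i:ℕ)) - u := by omega
    rw [h1, h2]
    have : (((k:ℕ)).choose ((i:ℕ)+u) * ((i:ℕ)+u).choose (i:ℕ) : ZMod p)
        = (((k:ℕ)).choose (i:ℕ) * (((k:ℕ)) - (i:ℕ)).choose u : ℕ) := by
      exact_mod_cast congrArg (Nat.cast : ℕ → ZMod p) hc
    push_cast at this
    calc ((((i:ℕ)+u).choose (i:ℕ) : ZMod p) * a ^ u) * (((k:ℕ).choose ((i:ℕ)+u) : ZMod p) * b ^ ((k:ℕ) - (i:ℕ) - u))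
        = (((k:ℕ).choose ((i:ℕ)+u) : ZMod p) * ((((i:ℕ)+u).choose (i:ℕ) : ZMod p))) * (a ^ u * b ^ ((k:ℕ) - (i:ℕ) - u)) := by ring
      _ = (((k:ℕ).choose (i:ℕ) : ZMod p) * ((((k:ℕ) - (i:ℕ)).choose u : ZMod p))) * (a ^ u * b ^ ((k:ℕ) - (i:ℕ) - u)) := by rw [this]
      _ = ((k:ℕ).choose (i:ℕ) : ZMod p) * (a ^ u * b ^ ((k:ℕ) - (i:ℕ) - u) * (((k:ℕ) - (i:ℕ)).choose u : ZMod p)) := by ring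
  · rw [if_neg hik]
    apply Finset.sum_eq_zero
    intro x hx
    by_cases h1 : (i:ℕ) ≤ x
    · rw [if_neg (show ¬ (x ≤ (k:ℕ)) by omega), mul_zero]
    · rw [if_neg h1, zero_mul]

lemma Tj_zero' (p n : ℕ) : Tj p n (0 : ZMod p) = (1 : Matrix (Fin n) (Fin n) (ZMod p)) := by
  ext i k
  rw [Tj, Matrix.of_apply, Matrix.one_apply]
  by_cases h : i = k
  · subst h; simp
  · rw [if_neg h]
    by_cases h2 : (i:ℕ) ≤ (k:ℕ)
    · have : (i:ℕ) ≠ (k:ℕ) := fun e => h (Fin.ext e)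
      rw [if_pos h2, zero_pow (by omega), mul_zero]
    · rw [if_neg h2]

lemma key_entry (p m d : ℕ) (hp : p.Prime) (hm : 2 ≤ m) (hd : 3 ≤ d)
    (f : Polynomial (ZMod p)) (hdeg : f.natDegree = d) (a : ZMod p)
    (j ℓ : ℕ) (hjm : j < m) (hlm : ℓ < m)
    (hcond : ℓ % m = (j * p) % m)
    (i k : ℕ) (hi : i < dBlock m d j) (hk : k < dBlock m d ℓ) :
    ∑ x ∈ range (dBlock m d ℓ),
        (if x + 1 ≤ (i + 1) * p then
          ((f.comp (X + C a)) ^ (p - 1 - j * p / m)).coeff ((i + 1) * p - (x + 1)) else 0)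
        * (if x ≤ k then ((k.choose x : ZMod p)) * a ^ (k - x) else 0)
      = ∑ x ∈ range (dBlock m d j),
        (if i ≤ x then ((x.choose i : ZMod p)) * a ^ (x - i) else 0)
        * (if k + 1 ≤ (x + 1) * p then (f ^ (p - 1 - j * p / m)).coeff ((x + 1) * p - (k + 1)) else 0) := by
  haveI : Fact p.Prime := ⟨hp⟩
  have hp2 := hp.two_le
  set n := p - 1 - j * p / m with hn
  set N := (i + 1) * p with hN
  set h := f ^ n with hh
  have hD : h.natDegree = n * d := by rw [hh, Polynomial.natDegree_pow, hdeg]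
  set D := n * d with hDdef
  have hℓ : ℓ = (j * p) % m := by rw [← hcond, Nat.mod_eq_of_lt hlm]
  have hdj : d * j / m + 2 ≤ d := by unfold dBlock at hi; omega
  have hdl : d * ℓ / m + 2 ≤ d := by unfold dBlock at hk; omega
  have KI : D + dBlock m d ℓ < (dBlock m d j + 1) * p :=
    keyIneq' p m d j ℓ hp2 hm hd hjm hlm hℓ hdj hdl
  have hcomp : (f.comp (X + C a)) ^ n = h.comp (X + C a) := (Polynomial.pow_comp f _ n).symm
  have hNp : p ≤ N := by
    rw [hN]; calc p = 1 * p := (one_mul p).symm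
      _ ≤ (i + 1) * p := Nat.mul_le_mul_right p (by omega)
  calc
    ∑ x ∈ range (dBlock m d ℓ),
        (if x + 1 ≤ N then ((f.comp (X + C a)) ^ n).coeff (N - (x + 1)) else 0)
        * (if x ≤ k then ((k.choose x : ZMod p)) * a ^ (k - x) else 0)
      = ∑ x ∈ range (dBlock m d ℓ), ∑ t ∈ range (D + 1),
          h.coeff t * ((if x + 1 ≤ N ∧ x ≤ k
            then ((k.choose x * t.choose (N - 1 - x) : ℕ) : ZMod p) else 0) * a ^ (t + k + 1 - N)) := by
        apply Finset.sum_congr rfl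
        intro x hx
        by_cases hg1 : x + 1 ≤ N
        swap
        · rw [if_neg hg1, zero_mul]
          symm; apply Finset.sum_eq_zero; intro t _
          rw [if_neg (by tauto), zero_mul, mul_zero]
        by_cases hg2 : x ≤ k
        swap
        · rw [if_neg hg2, mul_zero]
          symm; apply Finset.sum_eq_zero; intro t _
          rw [if_neg (by tauto), zero_mul, mul_zero]
        rw [if_pos hg1, hcomp, coeff_comp_add', hD, if_pos hg2, Finset.sum_mul]
        apply Finset.sum_congr rfl
        intro t ht
        rw [if_pos ⟨hg1, hg2⟩]
        have hidx : N - (x + 1) = N - 1 - x := by omega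
        rw [hidx]
        by_cases hts : N - 1 - x ≤ t
        · have hexp : t + k + 1 - N = (t - (N - 1 - x)) + (k - x) := by omega
          rw [hexp, pow_add]
          push_cast
          ring
        · rw [Nat.choose_eq_zero_of_lt (by omega)]
          push_cast
          ring
    _ = ∑ t ∈ range (D + 1), h.coeff t *
          ((((k + t).choose (N - 1) : ℕ) : ZMod p) * a ^ (t + k + 1 - N)) := by
        rw [Finset.sum_comm]
        apply Finset.sum_congr rfl
        intro t ht
        have hcast : ∀ x : ℕ, (if x + 1 ≤ N ∧ x ≤ k
              then ((k.choose x * t.choose (N - 1 - x) : ℕ) : ZMod p) else 0)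
            = (((if x + 1 ≤ N ∧ x ≤ k then k.choose x * t.choose (N - 1 - x) else 0 : ℕ)) : ZMod p) := by
          intro x; split <;> simp
        calc ∑ x ∈ range (dBlock m d ℓ),
              h.coeff t * ((if x + 1 ≤ N ∧ x ≤ k
                then ((k.choose x * t.choose (N - 1 - x) : ℕ) : ZMod p) else 0) * a ^ (t + k + 1 - N))
            = h.coeff t * ((∑ x ∈ range (dBlock m d ℓ), (if x + 1 ≤ N ∧ x ≤ k
                then ((k.choose x * t.choose (N - 1 - x) : ℕ) : ZMod p) else 0)) * a ^ (t + k + 1 - N)) := by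
              rw [← Finset.mul_sum, ← Finset.sum_mul]
          _ = _ := by
              rw [funext hcast, ← Nat.cast_sum, vand' k (dBlock m d ℓ) N t hk (by omega)]
    _ = ∑ t ∈ range (D + 1), h.coeff t *
          (((((k + t) % p).choose (p - 1) : ℕ) : ZMod p)
            * ((((k + t) / p).choose i : ℕ) : ZMod p) * a ^ (t + k + 1 - N)) := by
        apply Finset.sum_congr rfl
        intro t _
        have hsplitN : N - 1 = (p - 1) + i * p := by
          have e : (i + 1) * p = i * p + p := by ring
          omega
        have hmod : (N - 1) % p = p - 1 := by
          rw [hsplitN, Nat.add_mul_mod_self_right, Nat.mod_eq_of_lt (by omega)]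
        have hdiv : (N - 1) / p = i := by
          rw [hsplitN, Nat.add_mul_div_right _ _ (by omega : 0 < p),
            Nat.div_eq_of_lt (by omega), zero_add]
        have lucas : (((k + t).choose (N - 1) : ℕ) : ZMod p)
            = ((((k + t) % p).choose ((N - 1) % p) * (((k + t) / p).choose ((N - 1) / p)) : ℕ) : ZMod p) :=
          (ZMod.natCast_eq_natCast_iff _ _ _).mpr Choose.choose_modEq_choose_mod_mul_choose_div_nat
        rw [lucas, hmod, hdiv]
        push_cast
        ring
    _ = ∑ x ∈ range (dBlock m d j),
        (if i ≤ x then ((x.choose i : ZMod p)) * a ^ (x - i) else 0)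
        * (if k + 1 ≤ (x + 1) * p then h.coeff ((x + 1) * p - (k + 1)) else 0) := by
        apply Finset.sum_bij_ne_zero (fun t _ _ => (k + t) / p)
        · -- membership
          intro t ht hF
          rw [Finset.mem_range] at ht ⊢
          have hmlt : (k + t) % p < p := Nat.mod_lt _ (by omega)
          have hr : (k + t) % p = p - 1 := by
            by_contra hcon
            apply hF
            rw [Nat.choose_eq_zero_of_lt (by omega : (k + t) % p < p - 1)]
            push_cast
            ring
          have hqp : p * ((k + t) / p) + (p - 1) = k + t := by
            have hdm := Nat.div_add_mod (k + t) p
            omega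
          have e1 : (dBlock m d j + 1) * p = p * dBlock m d j + p := by ring
          have hlt : p * ((k + t) / p) < p * dBlock m d j := by omega
          exact lt_of_mul_lt_mul_left hlt (Nat.zero_le p)
        · -- injectivity
          intro t1 h11 h12 t2 h21 h22 heq
          have hmlt1 : (k + t1) % p < p := Nat.mod_lt _ (by omega)
          have hr1 : (k + t1) % p = p - 1 := by
            by_contra hcon
            apply h12
            rw [Nat.choose_eq_zero_of_lt (by omega : (k + t1) % p < p - 1)]
            push_cast; ring
          have hmlt2 : (k + t2) % p < p := Nat.mod_lt _ (by omega)
          have hr2 : (k + t2) % p = p - 1 := by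
            by_contra hcon
            apply h22
            rw [Nat.choose_eq_zero_of_lt (by omega : (k + t2) % p < p - 1)]
            push_cast; ring
          have hd1 := Nat.div_add_mod (k + t1) p
          have hd2 := Nat.div_add_mod (k + t2) p
          rw [heq] at hd1
          omega
        · -- surjectivity
          intro b hb hG
          rw [Finset.mem_range] at hb
          have hf1 : (if i ≤ b then ((b.choose i : ZMod p)) * a ^ (b - i) else 0) ≠ 0 :=
            fun e => hG (by rw [e, zero_mul])
          have hf2 : (if k + 1 ≤ (b + 1) * p then h.coeff ((b + 1) * p - (k + 1)) else 0) ≠ 0 :=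
            fun e => hG (by rw [e, mul_zero])
          have hib : i ≤ b := by by_contra hcon; rw [if_neg hcon] at hf1; exact hf1 rfl
          have hkb : k + 1 ≤ (b + 1) * p := by
            by_contra hcon; rw [if_neg hcon] at hf2; exact hf2 rfl
          rw [if_pos hib] at hf1
          rw [if_pos hkb] at hf2
          set tb := (b + 1) * p - (k + 1) with htb
          have e1 : (b + 1) * p = b * p + p := by ring
          have hktb : k + tb = (p - 1) + b * p := by omega
          have hmodb : (k + tb) % p = p - 1 := by
            rw [hktb, Nat.add_mul_mod_self_right, Nat.mod_eq_of_lt (by omega)]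
          have hdivb : (k + tb) / p = b := by
            rw [hktb, Nat.add_mul_div_right _ _ (by omega : 0 < p),
              Nat.div_eq_of_lt (by omega), zero_add]
          have hexp : tb + k + 1 - N = (b - i) * p := by
            have e2 : (b - i) * p = b * p - i * p := by rw [Nat.sub_mul]
            have e3 : (i + 1) * p = i * p + p := by ring
            omega
          refine ⟨tb, ?_, ?_, hdivb⟩
          · rw [Finset.mem_range]
            have := Polynomial.le_natDegree_of_ne_zero hf2
            rw [hD] at this
            omega
          · rw [hmodb, hdivb, Nat.choose_self, hexp, mul_comm (b - i) p, pow_mul, ZMod.pow_card]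
            push_cast
            intro e
            rcases mul_eq_zero.mp e with e1 | e2
            · exact Polynomial.le_natDegree_of_ne_zero hf2 |> fun _ => hf2 e1
            · rcases mul_eq_zero.mp e2 with e3 | e4
              · rcases mul_eq_zero.mp e3 with e5 | e6
                · exact one_ne_zero e5
                · exact hf1 (by rw [e6, zero_mul])
              · exact hf1 (by rw [e4, mul_zero])
        · -- values
          intro t ht hF
          rw [Finset.mem_range] at ht
          have hmlt : (k + t) % p < p := Nat.mod_lt _ (by omega)
          have hr : (k + t) % p = p - 1 := by
            by_contra hcon
            apply hF
            rw [Nat.choose_eq_zero_of_lt (by omega : (k + t) % p < p - 1)]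
            push_cast; ring
          set q := (k + t) / p with hq
          have hqp : p * q + (p - 1) = k + t := by
            have hdm := Nat.div_add_mod (k + t) p
            rw [← hq] at hdm
            omega
          have hiq : i ≤ q := by
            by_contra hcon
            apply hF
            rw [Nat.choose_eq_zero_of_lt (by omega : q < i)]
            push_cast; ring
          have e1 : (q + 1) * p = p * q + p := by ring
          have hkq : k + 1 ≤ (q + 1) * p := by omega
          have hidx : (q + 1) * p - (k + 1) = t := by omega
          have hexp : t + k + 1 - N = (q - i) * p := by
            have e2 : (q - i) * p = q * p - i * p := by rw [Nat.sub_mul]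
            have e3 : (i + 1) * p = i * p + p := by ring
            have e4 : q * p = p * q := by ring
            omega
          rw [if_pos hiq, if_pos hkq, hidx, hr, Nat.choose_self, hexp,
            mul_comm (q - i) p, pow_mul, ZMod.pow_card]
          push_cast
          ring



/-- Let `p` be prime, `m ≥ 2` with `p ∤ m`, and `f ∈ 𝔽_p[x]`
squarefree of degree `d ≥ 3`.  For every `a ∈ 𝔽_p` and all `1 ≤ j, ℓ ≤ μ` one has
`B^{jℓ}[f(x+a)] · T^ℓ(a) = T^j(a) · B^{jℓ}[f(x)]`; consequently
`A[f(x+a)] = T(a) · A[f(x)] · T(−a)`. -/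
theorem stmt13 (p m d : ℕ) (hp : p.Prime) (hm : 2 ≤ m) (hpm : ¬ p ∣ m)
    (f : Polynomial (ZMod p)) (hsqf : Squarefree f) (hdeg : f.natDegree = d) (hd : 3 ≤ d)
    (a : ZMod p) :
    (∀ j ℓ : ℕ, 1 ≤ j → j ≤ m - m / d - 1 → 1 ≤ ℓ → ℓ ≤ m - m / d - 1 →
      Bblock p m d (f.comp (Polynomial.X + Polynomial.C a)) j ℓ * Tj p (dBlock m d ℓ) a
        = Tj p (dBlock m d j) a * Bblock p m d f j ℓ) ∧
    Amat p m d (f.comp (Polynomial.X + Polynomial.C a))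
      = Tbig p m d a * Amat p m d f * Tbig p m d (-a) := by
  haveI : Fact p.Prime := ⟨hp⟩
  have part1 : ∀ j ℓ : ℕ, 1 ≤ j → j ≤ m - m / d - 1 → 1 ≤ ℓ → ℓ ≤ m - m / d - 1 →
      Bblock p m d (f.comp (Polynomial.X + Polynomial.C a)) j ℓ * Tj p (dBlock m d ℓ) a
        = Tj p (dBlock m d j) a * Bblock p m d f j ℓ := by
    intro j ℓ hj1 hj2 hl1 hl2
    have hsub : m - m / d - 1 ≤ m - 1 := Nat.sub_le_sub_right (Nat.sub_le m (m / d)) 1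
    have hm1 : m - 1 < m := Nat.sub_lt (by omega) one_pos
    have hjm : j < m := lt_of_le_of_lt (hj2.trans hsub) hm1
    have hlm : ℓ < m := lt_of_le_of_lt (hl2.trans hsub) hm1
    ext i k
    rw [Matrix.mul_apply, Matrix.mul_apply]
    by_cases hcond : ℓ % m = (j * p) % m
    · simp only [Bblock, Tj, Matrix.of_apply, hcond, eq_self_iff_true, true_and]
      rw [Fin.sum_univ_eq_sum_range (fun x =>
        (if x + 1 ≤ ((i:ℕ) + 1) * p then
          ((f.comp (X + C a)) ^ (p - 1 - j * p / m)).coeff (((i:ℕ) + 1) * p - (x + 1)) else 0)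
        * (if x ≤ (k:ℕ) then (((k:ℕ).choose x : ZMod p)) * a ^ ((k:ℕ) - x) else 0)) (dBlock m d ℓ)]
      rw [Fin.sum_univ_eq_sum_range (fun x =>
        (if (i:ℕ) ≤ x then ((x.choose (i:ℕ) : ZMod p)) * a ^ (x - (i:ℕ)) else 0)
        * (if (k:ℕ) + 1 ≤ (x + 1) * p then
            (f ^ (p - 1 - j * p / m)).coeff ((x + 1) * p - ((k:ℕ) + 1)) else 0)) (dBlock m d j)]
      exact key_entry p m d hp hm hd f hdeg a j ℓ hjm hlm hcond (i:ℕ) (k:ℕ) i.isLt k.isLt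
    · simp [Bblock, Tj, hcond]
  refine ⟨part1, ?_⟩
  have hinv : ∀ nn : ℕ, Tj p nn a * Tj p nn (-a) = 1 := by
    intro nn
    rw [Tj_mul', add_neg_cancel, Tj_zero']
  have hBlock : ∀ (j ℓ : ℕ), 1 ≤ j → j ≤ m - m / d - 1 → 1 ≤ ℓ → ℓ ≤ m - m / d - 1 →
      Bblock p m d (f.comp (Polynomial.X + Polynomial.C a)) j ℓ
        = Tj p (dBlock m d j) a * Bblock p m d f j ℓ * Tj p (dBlock m d ℓ) (-a) := by
    intro j ℓ h1 h2 h3 h4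
    rw [← part1 j ℓ h1 h2 h3 h4, Matrix.mul_assoc, hinv, Matrix.mul_one]
  ext x y
  obtain ⟨xj, xi⟩ := x
  obtain ⟨yj, yi⟩ := y
  have hL : Amat p m d (f.comp (Polynomial.X + Polynomial.C a)) ⟨xj, xi⟩ ⟨yj, yi⟩
      = ∑ wi : Fin (dBlock m d ((yj:ℕ)+1)), (∑ zi : Fin (dBlock m d ((xj:ℕ)+1)),
          Tj p (dBlock m d ((xj:ℕ)+1)) a xi zi
            * Bblock p m d f ((xj:ℕ)+1) ((yj:ℕ)+1) zi wi)
          * Tj p (dBlock m d ((yj:ℕ)+1)) (-a) wi yi := by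
    show Bblock p m d (f.comp (Polynomial.X + Polynomial.C a)) ((xj:ℕ)+1) ((yj:ℕ)+1) xi yi = _
    rw [hBlock ((xj:ℕ)+1) ((yj:ℕ)+1) (by omega) (by exact xj.isLt)
      (by omega) (by exact yj.isLt)]
    rw [Matrix.mul_apply]
    apply Finset.sum_congr rfl
    intro wi _
    rw [Matrix.mul_apply]
  rw [hL]
  rw [Matrix.mul_apply]
  rw [← Finset.univ_sigma_univ, Finset.sum_sigma]
  symm
  rw [Finset.sum_eq_single yj]
  rotate_left
  · intro b _ hb
    apply Finset.sum_eq_zero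
    intro wi _
    have : Tbig p m d (-a) ⟨b, wi⟩ ⟨yj, yi⟩ = 0 := by
      rw [Tbig, Matrix.of_apply, if_neg]
      rintro ⟨hbv, -⟩
      exact hb (Fin.ext hbv)
    rw [this, mul_zero]
  · intro h
    exact absurd (Finset.mem_univ yj) h
  apply Finset.sum_congr rfl
  intro wi _
  congr 1
  · rw [Matrix.mul_apply]
    rw [← Finset.univ_sigma_univ, Finset.sum_sigma]
    rw [Finset.sum_eq_single xj]
    rotate_left
    · intro b _ hb
      apply Finset.sum_eq_zero
      intro zi _
      have : Tbig p m d a ⟨xj, xi⟩ ⟨b, zi⟩ = 0 := by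
        rw [Tbig, Matrix.of_apply, if_neg]
        rintro ⟨hbv, -⟩
        exact hb (Fin.ext hbv.symm)
      rw [this, zero_mul]
    · intro h
      exact absurd (Finset.mem_univ xj) h
    apply Finset.sum_congr rfl
    intro zi _
    congr 1
    · rw [Tbig, Tj, Matrix.of_apply, Matrix.of_apply]
      simp
  · rw [Tbig, Tj, Matrix.of_apply, Matrix.of_apply]
    simp
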